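/- For every integer n ≥ 2, the q-Λ-variation of h_n satisfies V_{Λ,q}(h_n) ≤ 2^{−n}; that is, for every finite family {I_i}_{i=1}^m of pairwise non-overlapping closed subintervals of [0,1], (Σ_{i=1}^m |h_n(I_i)|^q/λ_i)^{1/q} ≤ 2^{−n}. -/

import Mathlib

open Filter Set
open scoped ENNReal Classical

noncomputable section

/-- `Λ = （λ_i)_{i≥1}` is a Waterman sequence: positive, nondecreasing, `λ_1 = 1`,
and `∑ 1/λ_i = ∞`. -/
def WatermanSeq (lam : ℕ → ℝ) : Prop :=
  (∀ i, 0 < lam i) ∧ Monotone lam ∧ lam 1 = 1 ∧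
    Tendsto (fun n => ∑ i ∈ Finset.Icc 1 n, 1 / lam i) atTop atTop

/-- `Λ(M) = ∑_{i=1}^{M} 1/λ_i`. -/
def LamSum (lam : ℕ → ℝ) (M : ℕ) : ℝ := ∑ i ∈ Finset.Icc 1 M, 1 / lam i

/-- `{[a i, b i]}_{i < m}` is a finite family of pairwise non-overlapping closed
subintervals of `[0,1]`. -/
def NonOverlapping (m : ℕ) (a b : ℕ → ℝ) : Prop :=
  (∀ i < m, 0 ≤ a i ∧ a i ≤ b i ∧ b i ≤ 1) ∧
    ∀ i < m, ∀ j < m, i ≠ j → b i ≤ a j ∨ b j ≤ a i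

/-- `(∑_{i=1}^m |f(I_i)|^s / λ_i)^{1/s}` for the family `I_i = [a i, b i]`. -/
def vSum (lam : ℕ → ℝ) (s : ℝ) (f : ℝ → ℝ) (m : ℕ) (a b : ℕ → ℝ) : ℝ :=
  (∑ i ∈ Finset.range m, |f (b i) - f (a i)| ^ s / lam (i + 1)) ^ (1 / s)

/-- The `s`-`Λ`-variation `V_{Λ,s}(f)`, an element of `[0,∞]`. -/
def variation (lam : ℕ → ℝ) (s : ℝ) (f : ℝ → ℝ) : ℝ≥0∞ :=
  ⨆ (m : ℕ) (a : ℕ → ℝ) (b : ℕ → ℝ) (_ : NonOverlapping m a b),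
    ENNReal.ofReal (vSum lam s f m a b)

/-- `M_n = 2^(3n-1)`. -/
def Mseq (n : ℕ) : ℕ := 2 ^ (3 * n - 1)

/-- `b_{n,j} = 2^{-n} + (2j-2)/2^{4n}`. -/
def bb (n j : ℕ) : ℝ := ((2 : ℝ) ^ n)⁻¹ + (2 * (j : ℝ) - 2) / 2 ^ (4 * n)

/-- `c_{n,j} = 2^{-n} + (2j-1)/2^{4n}`. -/
def cc (n j : ℕ) : ℝ := ((2 : ℝ) ^ n)⁻¹ + (2 * (j : ℝ) - 1) / 2 ^ (4 * n)

/-- The function `h_n`. -/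
def hfun (lam : ℕ → ℝ) (q : ℝ) (n : ℕ) (y : ℝ) : ℝ :=
  if ∃ j, 1 ≤ j ∧ j ≤ (Mseq n - 2) / 2 ∧ y ∈ Set.Ico (bb n j) (cc n j) then
    ((2 : ℝ) ^ n)⁻¹ * LamSum lam (Mseq n) ^ (-(1 / q))
  else 0

/-- `h = ∑_{n=2}^∞ h_n`. -/
def hh (lam : ℕ → ℝ) (q : ℝ) (y : ℝ) : ℝ := ∑' n : ℕ, hfun lam q (n + 2) y

/-- The sequence `r`: `r_{2k} = c_{k+2,(M_{k+2}-2)/2}`, `r_{2k+1} = b_{k+2,(M_{k+2}-2)/2}`. -/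
def rr (i : ℕ) : ℝ :=
  if i % 2 = 0 then cc (i / 2 + 2) ((Mseq (i / 2 + 2) - 2) / 2)
  else bb (i / 2 + 2) ((Mseq (i / 2 + 2) - 2) / 2)

/-- `f(J_i) = f(r_{i-1}) - f(r_i)` where `J_i = [r_i, r_{i-1}]` (for `i ≥ 1`). -/
def incrJ (f : ℝ → ℝ) (i : ℕ) : ℝ := f (rr (i - 1)) - f (rr i)

/-- `p_{(n_k)}(j) = (-1)^{k+1}` if `j = n_k` for some `k ≥ 1`, and `0` otherwise. -/
def psgn (nseq : ℕ → ℕ) (j : ℕ) : ℝ :=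
  if h : ∃ k, 1 ≤ k ∧ nseq k = j then (-1 : ℝ) ^ (h.choose + 1) else 0

/-- The `j`-th (here `j = m+1`, `m : ℕ`) term of the series defining `L_{(n_k)}`:
`p_{(n_k)}(j) ∑_{i=1}^2 (-1)^i f(J_{2(j-1)+i}) |h(J_{2(j-1)+i})| / λ_{2(j-1)+i}`. -/
def Lterm (lam : ℕ → ℝ) (q : ℝ) (nseq : ℕ → ℕ) (f : ℝ → ℝ) (m : ℕ) : ℝ :=
  psgn nseq (m + 1) * ∑ i ∈ Finset.Icc 1 2,
    (-1 : ℝ) ^ i * incrJ f (2 * m + i) * |incrJ (hh lam q) (2 * m + i)| / lam (2 * m + i)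

/-- The functional `L_{(n_k)}(f) = f(J') + ∑_{j=1}^∞ (…)`, with `J' = [3/8, 3/8 + 2⁻⁸]`. -/
def Lfun (lam : ℕ → ℝ) (q : ℝ) (nseq : ℕ → ℕ) (f : ℝ → ℝ) : ℝ :=
  (f (3 / 8 + 1 / 2 ^ 8) - f (3 / 8)) + ∑' m : ℕ, Lterm lam q nseq f m

/-- The tent function `f_l`. -/
def tent (nseq : ℕ → ℕ) (l : ℕ) (x : ℝ) : ℝ :=
  if 3 / 8 < x ∧ x ≤ 3 / 8 + 1 / 2 ^ 8 then psgn nseq l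
  else if rr (2 * l) ≤ x ∧ x ≤ rr (2 * l - 1) then
    (x - rr (2 * l)) / (rr (2 * l - 1) - rr (2 * l))
  else if rr (2 * l - 1) ≤ x ∧ x ≤ rr (2 * l - 2) then
    (rr (2 * l - 2) - x) / (rr (2 * l - 2) - rr (2 * l - 1))
  else 0

/-- Rearrangement: sum of `1/lam i` over a finset of positive naturals is at most
the sum over the initial segment of the same cardinality. -/
lemma my_sum_inv_le (lam : ℕ → ℝ) (hmono : Monotone lam) (hpos : ∀ i, 0 < lam i) :
    ∀ k (S : Finset ℕ), S.card = k → (∀ i ∈ S, 1 ≤ i) →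
      ∑ i ∈ S, 1 / lam i ≤ ∑ j ∈ Finset.Icc 1 k, 1 / lam j := by
  intro k
  induction k with
  | zero =>
    intro S hcard _
    rw [Finset.card_eq_zero.mp hcard]
    simp
  | succ k ih =>
    intro S hcard hS
    have hne : S.Nonempty := Finset.card_pos.mp (by omega)
    set t := S.max' hne with htdef
    have ht : t ∈ S := S.max'_mem hne
    have htk : k + 1 ≤ t := by
      have hsub : S ⊆ Finset.Icc 1 t := fun i hi =>
        Finset.mem_Icc.mpr ⟨hS i hi, S.le_max' i hi⟩
      have := Finset.card_le_card hsub
      rw [Nat.card_Icc] at this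
      omega
    have h1 : ∑ i ∈ S.erase t, 1 / lam i + 1 / lam t = ∑ i ∈ S, 1 / lam i :=
      Finset.sum_erase_add _ _ ht
    have h2 : ∑ j ∈ Finset.Icc 1 (k + 1), 1 / lam j
        = ∑ j ∈ Finset.Icc 1 k, 1 / lam j + 1 / lam (k + 1) := by
      rw [← Finset.sum_Icc_succ_top (by omega)]
    rw [← h1, h2]
    have hih := ih (S.erase t) (by rw [Finset.card_erase_of_mem ht, hcard]; omega) 
      (fun i hi => hS i (Finset.mem_of_mem_erase hi))
    have hlast : 1 / lam t ≤ 1 / lam (k + 1) :=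
      one_div_le_one_div_of_le (hpos _) (hmono htk)
    linarith

/-- for `n ≥ 2`, `V_{Λ,q}(h_n) ≤ 2^{-n}`: for every finite family of pairwise
non-overlapping closed subintervals of `[0,1]`,
`(∑_{i=1}^m |h_n(I_i)|^q/λ_i)^{1/q} ≤ 2^{-n}`. -/
theorem stmt2 (lam : ℕ → ℝ) (hlam : WatermanSeq lam) (p q : ℝ)
    (hp : 1 < p) (hq : 1 < q) (hpq : 1 / p + 1 / q = 1)
    (n : ℕ) (hn : 2 ≤ n) (m : ℕ) (a b : ℕ → ℝ) (hab : NonOverlapping m a b) :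
    vSum lam q (hfun lam q n) m a b ≤ ((2 : ℝ) ^ n)⁻¹ := by
  obtain ⟨hpos, hmono, hone, _⟩ := hlam
  have hq0 : 0 < q := zero_lt_one.trans hq
  have hqne : q ≠ 0 := ne_of_gt hq0
  set N := (Mseq n - 2) / 2 with hN
  have hM2 : 2 ≤ Mseq n := by
    have h1 : (2:ℕ)^1 ≤ 2^(3*n-1) := Nat.pow_le_pow_right (by norm_num) (by omega)
    simpa [Mseq] using h1
  have hLpos : 0 < LamSum lam (Mseq n) := by
    apply Finset.sum_pos
    · intro i _; exact one_div_pos.mpr (hpos i)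
    · exact ⟨1, Finset.mem_Icc.mpr ⟨le_refl 1, by omega⟩⟩
  set L := LamSum lam (Mseq n) with hLdef
  set v := ((2:ℝ)^n)⁻¹ * L ^ (-(1/q)) with hvdef
  have hvpos : 0 < v := mul_pos (by positivity) (Real.rpow_pos_of_pos hLpos _)
  set h := hfun lam q n with hhdef
  set U := fun y : ℝ => ∃ j, 1 ≤ j ∧ j ≤ N ∧ y ∈ Set.Ico (bb n j) (cc n j) with hUdef
  have hUy : ∀ y, U y → h y = v := by
    intro y hy
    have hy' : ∃ j, 1 ≤ j ∧ j ≤ (Mseq n - 2) / 2 ∧ y ∈ Set.Ico (bb n j) (cc n j) := hy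
    rw [hhdef, hfun, if_pos hy', hvdef, hLdef]
  have hUn : ∀ y, ¬ U y → h y = 0 := by
    intro y hy
    have hy' : ¬ ∃ j, 1 ≤ j ∧ j ≤ (Mseq n - 2) / 2 ∧ y ∈ Set.Ico (bb n j) (cc n j) := hy
    rw [hhdef, hfun, if_neg hy']
  have hval : ∀ y, h y = 0 ∨ h y = v := by
    intro y
    by_cases hy : U y
    · exact Or.inr (hUy y hy)
    · exact Or.inl (hUn y hy)
  have habs : ∀ y z, |h y - h z| ≤ v := by
    intro y z
    rcases hval y with hy | hy <;> rcases hval z with hz | hz <;> rw [hy, hz]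
    · simpa using hvpos.le
    · rw [zero_sub, abs_neg, abs_of_nonneg hvpos.le]
    · rw [sub_zero, abs_of_nonneg hvpos.le]
    · simpa using hvpos.le
  set S := (Finset.range m).filter (fun i => h (b i) ≠ h (a i)) with hSdef
  -- counting: S.card ≤ Mseq n
  classical
  set F : ℕ → ℕ := fun i =>
    if hb : ∃ j, 1 ≤ j ∧ j ≤ N ∧ b i ∈ Set.Ico (bb n j) (cc n j) then 2 * hb.choose
    else if ha : ∃ j, 1 ≤ j ∧ j ≤ N ∧ a i ∈ Set.Ico (bb n j) (cc n j) then 2 * ha.choose + 1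
    else 0 with hFdef
  have hSmem : ∀ i ∈ S, i < m ∧ h (b i) ≠ h (a i) := by
    intro i hi
    rw [hSdef, Finset.mem_filter, Finset.mem_range] at hi
    exact hi
  have hcardS : S.card ≤ 2 * N + 2 := by
    have hle : S.card ≤ (Finset.range (2 * N + 2)).card := by
      apply Finset.card_le_card_of_injOn F
      · -- maps into range
          intro i hi
          obtain ⟨him, hne⟩ := hSmem i hi
          rw [Finset.mem_coe, Finset.mem_range]
          simp only [hFdef]
          split
          · next hb =>
            obtain ⟨h1, h2, _⟩ := hb.choose_spec
            omega
          · split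
            · next ha =>
              obtain ⟨h1, h2, _⟩ := ha.choose_spec
              omega
            · next hb ha =>
              exfalso
              exact hne (by rw [hUn _ hb, hUn _ ha])
      · -- injective on S
        intro i hi i' hi' hFe
        by_contra hii
        obtain ⟨him, hne⟩ := hSmem i hi
        obtain ⟨him', hne'⟩ := hSmem i' hi'
        have hai : 0 ≤ a i ∧ a i ≤ b i ∧ b i ≤ 1 := hab.1 i him
        have hai' : 0 ≤ a i' ∧ a i' ≤ b i' ∧ b i' ≤ 1 := hab.1 i' him'
        have hov := hab.2 i him i' him' hii
        simp only [hFdef] at hFe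
        by_cases hb : ∃ j, 1 ≤ j ∧ j ≤ N ∧ b i ∈ Set.Ico (bb n j) (cc n j)
        · -- b i in a plateau; then a i is not in U
          by_cases hb' : ∃ j, 1 ≤ j ∧ j ≤ N ∧ b i' ∈ Set.Ico (bb n j) (cc n j)
          · rw [dif_pos hb, dif_pos hb'] at hFe
            have hj : hb.choose = hb'.choose := by omega
            obtain ⟨hj1, hj2, hjm⟩ := hb.choose_spec
            obtain ⟨hj1', hj2', hjm'⟩ := hb'.choose_spec
            rw [← hj] at hjm' hj1' hj2'
            set j := hb.choose
            -- a i not in U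
            have haU : ¬ U (a i) := by
              intro hU'
              exact hne (by rw [hUy _ hb, hUy _ hU'])
            have haU' : ¬ U (a i') := by
              intro hU'
              exact hne' (by rw [hUy _ hb', hUy _ hU'])
            simp only [hUdef] at haU haU'
            push_neg at haU haU'
            have h3 := haU j hj1 hj2
            have h3' := haU' j hj1 hj2
            rw [Set.mem_Ico] at hjm hjm' h3 h3'
            push_neg at h3 h3'
            -- a i < bb n j ≤ b i < cc n j, same for i'
            have h4 : a i < bb n j := by
              rcases lt_or_ge (a i) (bb n j) with hlt | hge
              · exact hlt
              · exact absurd (lt_of_le_of_lt hai.2.1 hjm.2) (not_lt.mpr (h3 hge))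
            have h4' : a i' < bb n j := by
              rcases lt_or_ge (a i') (bb n j) with hlt | hge
              · exact hlt
              · exact absurd (lt_of_le_of_lt hai'.2.1 hjm'.2) (not_lt.mpr (h3' hge))
            rcases hov with hov | hov
            · linarith [hjm.1]
            · linarith [hjm'.1]
          · rw [dif_pos hb, dif_neg hb'] at hFe
            split at hFe <;> omega
        · by_cases hb' : ∃ j, 1 ≤ j ∧ j ≤ N ∧ b i' ∈ Set.Ico (bb n j) (cc n j)
          · rw [dif_neg hb, dif_pos hb'] at hFe
            split at hFe <;> omega
          · rw [dif_neg hb, dif_neg hb'] at hFe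
            have ha : ∃ j, 1 ≤ j ∧ j ≤ N ∧ a i ∈ Set.Ico (bb n j) (cc n j) := by
              by_contra hc
              exact hne (by rw [hUn _ hb, hUn _ hc])
            have ha' : ∃ j, 1 ≤ j ∧ j ≤ N ∧ a i' ∈ Set.Ico (bb n j) (cc n j) := by
              by_contra hc
              exact hne' (by rw [hUn _ hb', hUn _ hc])
            rw [dif_pos ha, dif_pos ha'] at hFe
            have hj : ha.choose = ha'.choose := by omega
            obtain ⟨hj1, hj2, hjm⟩ := ha.choose_spec
            obtain ⟨hj1', hj2', hjm'⟩ := ha'.choose_spec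
            rw [← hj] at hjm' hj1' hj2'
            set j := ha.choose
            push_neg at hb hb'
            have h3 := hb j hj1 hj2
            have h3' := hb' j hj1 hj2
            rw [Set.mem_Ico] at hjm hjm' h3 h3'
            push_neg at h3 h3'
            have h4 : cc n j ≤ b i := h3 (le_trans hjm.1 hai.2.1)
            have h4' : cc n j ≤ b i' := h3' (le_trans hjm'.1 hai'.2.1)
            rcases hov with hov | hov
            · linarith [hjm'.2]
            · linarith [hjm.2]
    simpa using hle
  have hcardM : S.card ≤ Mseq n := by omega
  -- the sum bound
  have hterm0 : ∀ i ∈ Finset.range m, i ∉ S →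
      |h (b i) - h (a i)| ^ q / lam (i + 1) = 0 := by
    intro i hi hiS
    have heq : h (b i) = h (a i) := by
      by_contra hc
      exact hiS (Finset.mem_filter.mpr ⟨hi, hc⟩)
    rw [heq, sub_self, abs_zero, Real.zero_rpow hqne, zero_div]
  have hsum1 : ∑ i ∈ Finset.range m, |h (b i) - h (a i)| ^ q / lam (i + 1)
      = ∑ i ∈ S, |h (b i) - h (a i)| ^ q / lam (i + 1) :=
    (Finset.sum_subset (Finset.filter_subset _ _) hterm0).symm
  have hsum2 : ∑ i ∈ S, |h (b i) - h (a i)| ^ q / lam (i + 1)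
      ≤ ∑ i ∈ S, v ^ q / lam (i + 1) := by
    apply Finset.sum_le_sum
    intro i _
    have h1 : |h (b i) - h (a i)| ^ q ≤ v ^ q :=
      Real.rpow_le_rpow (abs_nonneg _) (habs _ _) hq0.le
    exact div_le_div_of_nonneg_right h1 (hpos _).le
  have hsum3 : ∑ i ∈ S, v ^ q / lam (i + 1) = v ^ q * ∑ i ∈ S, 1 / lam (i + 1) := by
    rw [Finset.mul_sum]
    exact Finset.sum_congr rfl fun i _ => by rw [mul_one_div]
  have hshift : ∑ i ∈ S, 1 / lam (i + 1) = ∑ i ∈ S.image (· + 1), 1 / lam i := by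
    rw [Finset.sum_image]
    intro x _ y _ hxy
    simp only at hxy
    omega
  have hre : ∑ i ∈ S.image (· + 1), 1 / lam i ≤ L := by
    have hc : (S.image (· + 1)).card ≤ Mseq n :=
      le_trans Finset.card_image_le hcardM
    have h1 := my_sum_inv_le lam hmono hpos (S.image (· + 1)).card (S.image (· + 1)) rfl
      (by intro i hi
          obtain ⟨x, _, hx⟩ := Finset.mem_image.mp hi
          omega)
    refine le_trans h1 ?_
    rw [hLdef, LamSum]
    apply Finset.sum_le_sum_of_subset_of_nonneg
    · exact Finset.Icc_subset_Icc le_rfl hc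
    · intro i _ _
      exact (one_div_pos.mpr (hpos i)).le
  have hvq : v ^ q * L = (((2:ℝ)^n)⁻¹) ^ q := by
    rw [hvdef, Real.mul_rpow (by positivity) (Real.rpow_nonneg hLpos.le _),
      ← Real.rpow_mul hLpos.le]
    have he : -(1/q) * q = -1 := by field_simp
    rw [he, Real.rpow_neg_one, mul_assoc, inv_mul_cancel₀ (ne_of_gt hLpos), mul_one]
  have hTnonneg : 0 ≤ ∑ i ∈ Finset.range m, |h (b i) - h (a i)| ^ q / lam (i + 1) :=
    Finset.sum_nonneg fun i _ => div_nonneg (Real.rpow_nonneg (abs_nonneg _) _) (hpos _).le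
  have hT : ∑ i ∈ Finset.range m, |h (b i) - h (a i)| ^ q / lam (i + 1)
      ≤ (((2:ℝ)^n)⁻¹) ^ q := by
    rw [hsum1]
    calc ∑ i ∈ S, |h (b i) - h (a i)| ^ q / lam (i + 1)
        ≤ ∑ i ∈ S, v ^ q / lam (i + 1) := hsum2
      _ = v ^ q * ∑ i ∈ S, 1 / lam (i + 1) := hsum3
      _ ≤ v ^ q * L := by
          apply mul_le_mul_of_nonneg_left _ (Real.rpow_nonneg hvpos.le q)
          rw [hshift]; exact hre
      _ = (((2:ℝ)^n)⁻¹) ^ q := hvq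
  rw [vSum]
  calc (∑ i ∈ Finset.range m, |h (b i) - h (a i)| ^ q / lam (i + 1)) ^ (1/q)
      ≤ ((((2:ℝ)^n)⁻¹) ^ q) ^ (1/q) :=
        Real.rpow_le_rpow hTnonneg hT (by positivity)
    _ = ((2:ℝ)^n)⁻¹ := by
        rw [← Real.rpow_mul (by positivity), mul_one_div_cancel hqne, Real.rpow_one]
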